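/- Let f : ℝⁿ → ℝ be differentiable with L-Lipschitz gradient. Then for every x and ε ≥ 0, the supremum of |f(x+δ) − f(x)| over ‖δ‖_∞ ≤ ε satisfies ε‖∇f(x)‖₁ − (L/2)nε² ≤ sup ≤ ε‖∇f(x)‖₁ + (L/2)nε². -/

import Mathlib

open scoped RealInnerProductSpace

private lemma taylor_aux {n : ℕ} {f : EuclideanSpace ℝ (Fin n) → ℝ} {L : ℝ}
    (hf : Differentiable ℝ f)
    (hL : ∀ x y : EuclideanSpace ℝ (Fin n), ‖gradient f x - gradient f y‖ ≤ L * ‖x - y‖)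
    (x δ : EuclideanSpace ℝ (Fin n)) :
    |f (x + δ) - f x - ⟪gradient f x, δ⟫| ≤ L / 2 * ‖δ‖ ^ 2 := by
  have hcont : Continuous (gradient f) := by
    have : LipschitzWith (Real.toNNReal L) (gradient f) := by
      apply LipschitzWith.of_dist_le_mul
      intro a b
      rw [dist_eq_norm, dist_eq_norm]
      calc ‖gradient f a - gradient f b‖ ≤ L * ‖a - b‖ := hL a b
        _ ≤ Real.toNNReal L * ‖a - b‖ := by
            apply mul_le_mul_of_nonneg_right (Real.le_coe_toNNReal L) (norm_nonneg _)
    exact this.continuous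
  set φ' : ℝ → ℝ := fun t => ⟪gradient f (x + t • δ), δ⟫ with hφ'
  have hφcont : Continuous φ' := by
    apply Continuous.inner
    · exact hcont.comp (by continuity)
    · exact continuous_const
  have hderiv : ∀ t : ℝ, HasDerivAt (fun t : ℝ => f (x + t • δ)) (φ' t) t := by
    intro t
    have hc : HasDerivAt (fun t : ℝ => x + t • δ) δ t := by
      simpa using ((hasDerivAt_id t).smul_const δ).const_add x
    have hF := ((hf (x + t • δ)).hasGradientAt.hasFDerivAt).comp_hasDerivAt t hc
    exact hF
  have hFTC : ∫ t in (0:ℝ)..1, φ' t = f (x + δ) - f x := by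
    have h := intervalIntegral.integral_eq_sub_of_hasDerivAt
      (f := fun t : ℝ => f (x + t • δ)) (f' := φ')
      (fun t _ => hderiv t) (hφcont.intervalIntegrable 0 1)
    simpa using h
  have hφ'0 : φ' 0 = ⟪gradient f x, δ⟫ := by simp [hφ']
  have key : f (x + δ) - f x - ⟪gradient f x, δ⟫ = ∫ t in (0:ℝ)..1, (φ' t - φ' 0) := by
    rw [intervalIntegral.integral_sub (hφcont.intervalIntegrable 0 1)
      (intervalIntegrable_const), hFTC, intervalIntegral.integral_const, hφ'0]
    simp
  have pt : ∀ t ∈ Set.Icc (0:ℝ) 1, |φ' t - φ' 0| ≤ L * ‖δ‖ ^ 2 * t := by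
    intro t ht
    have heq : φ' t - φ' 0 = ⟪gradient f (x + t • δ) - gradient f x, δ⟫ := by
      rw [hφ'0, hφ', inner_sub_left]
    rw [heq]
    calc |⟪gradient f (x + t • δ) - gradient f x, δ⟫|
        ≤ ‖gradient f (x + t • δ) - gradient f x‖ * ‖δ‖ := abs_real_inner_le_norm _ _
      _ ≤ (L * ‖(x + t • δ) - x‖) * ‖δ‖ :=
          mul_le_mul_of_nonneg_right (hL _ _) (norm_nonneg δ)
      _ = L * ‖δ‖ ^ 2 * t := by
          rw [add_sub_cancel_left, norm_smul, Real.norm_eq_abs, abs_of_nonneg ht.1]; ring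
  have habs : |f (x + δ) - f x - ⟪gradient f x, δ⟫|
      ≤ ∫ t in (0:ℝ)..1, L * ‖δ‖ ^ 2 * t := by
    rw [key]
    calc |∫ t in (0:ℝ)..1, (φ' t - φ' 0)|
        ≤ ∫ t in (0:ℝ)..1, |φ' t - φ' 0| :=
          intervalIntegral.abs_integral_le_integral_abs zero_le_one
      _ ≤ ∫ t in (0:ℝ)..1, L * ‖δ‖ ^ 2 * t := by
          apply intervalIntegral.integral_mono_on zero_le_one
          · exact ((hφcont.sub continuous_const).abs).intervalIntegrable 0 1
          · exact (continuous_const.mul continuous_id).intervalIntegrable 0 1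
          · exact pt
  have : ∫ t in (0:ℝ)..1, L * ‖δ‖ ^ 2 * t = L / 2 * ‖δ‖ ^ 2 := by
    rw [intervalIntegral.integral_const_mul, integral_id]; ring
  linarith [habs, this.symm ▸ habs]

/-- For `f` differentiable with `L`-Lipschitz gradient, the supremum of
`|f (x+δ) - f x|` over `‖δ‖_∞ ≤ ε` lies between `ε‖∇f x‖₁ - (L/2) n ε²` and
`ε‖∇f x‖₁ + (L/2) n ε²`. -/
theorem sup_change_approx (n : ℕ) (f : EuclideanSpace ℝ (Fin n) → ℝ) (L : ℝ)
    (hf : Differentiable ℝ f)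
    (hL : ∀ x y : EuclideanSpace ℝ (Fin n), ‖gradient f x - gradient f y‖ ≤ L * ‖x - y‖)
    (x : EuclideanSpace ℝ (Fin n)) (ε : ℝ) (hε : 0 ≤ ε) :
    ε * (∑ i, |gradient f x i|) - L / 2 * n * ε ^ 2 ≤
      sSup {y : ℝ | ∃ δ : EuclideanSpace ℝ (Fin n),
        (∀ i, |δ i| ≤ ε) ∧ y = |f (x + δ) - f x|} ∧
    sSup {y : ℝ | ∃ δ : EuclideanSpace ℝ (Fin n),
        (∀ i, |δ i| ≤ ε) ∧ y = |f (x + δ) - f x|} ≤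
      ε * (∑ i, |gradient f x i|) + L / 2 * n * ε ^ 2 := by
  classical
  set S := {y : ℝ | ∃ δ : EuclideanSpace ℝ (Fin n),
      (∀ i, |δ i| ≤ ε) ∧ y = |f (x + δ) - f x|} with hS
  have hL0 : n ≠ 0 → 0 ≤ L := by
    intro hn
    have i0 : Fin n := ⟨0, Nat.pos_of_ne_zero hn⟩
    have h := (norm_nonneg (gradient f x - gradient f (x + EuclideanSpace.single i0 1))).trans
      (hL x (x + EuclideanSpace.single i0 1))
    have hx : x - (x + EuclideanSpace.single i0 (1:ℝ)) = -(EuclideanSpace.single i0 (1:ℝ)) := by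
      abel
    rw [hx, norm_neg, EuclideanSpace.norm_single] at h
    simpa using h
  have hnorm : ∀ δ : EuclideanSpace ℝ (Fin n), (∀ i, |δ i| ≤ ε) →
      L / 2 * ‖δ‖ ^ 2 ≤ L / 2 * n * ε ^ 2 := by
    intro δ hδ
    rcases Nat.eq_zero_or_pos n with h0 | hpos
    · subst h0
      simp [EuclideanSpace.norm_eq]
    · have hLnn : 0 ≤ L := hL0 (by omega)
      have hsq : ‖δ‖ ^ 2 ≤ (n : ℝ) * ε ^ 2 := by
        rw [EuclideanSpace.norm_eq, Real.sq_sqrt (by positivity)]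
        calc ∑ i, ‖δ i‖ ^ 2 ≤ ∑ _i : Fin n, ε ^ 2 := by
              apply Finset.sum_le_sum; intro i _
              rw [Real.norm_eq_abs]
              exact pow_le_pow_left₀ (abs_nonneg _) (hδ i) 2
          _ = (n : ℝ) * ε ^ 2 := by
              rw [Finset.sum_const, Finset.card_univ, Fintype.card_fin, nsmul_eq_mul]
      calc L / 2 * ‖δ‖ ^ 2 ≤ L / 2 * ((n : ℝ) * ε ^ 2) :=
            mul_le_mul_of_nonneg_left hsq (by linarith)
        _ = L / 2 * n * ε ^ 2 := by ring
  have hinner : ∀ δ : EuclideanSpace ℝ (Fin n), (∀ i, |δ i| ≤ ε) →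
      |⟪gradient f x, δ⟫| ≤ ε * ∑ i, |gradient f x i| := by
    intro δ hδ
    rw [PiLp.inner_apply]
    simp only [RCLike.inner_apply, starRingEnd_apply, star_trivial]
    rw [show (∑ i, δ i * gradient f x i) = ∑ i, gradient f x i * δ i from
      Finset.sum_congr rfl fun i _ => mul_comm _ _]
    calc |∑ i, gradient f x i * δ i| ≤ ∑ i, |gradient f x i * δ i| :=
          Finset.abs_sum_le_sum_abs _ _
      _ ≤ ∑ i, |gradient f x i| * ε := by
          apply Finset.sum_le_sum; intro i _
          rw [abs_mul]
          exact mul_le_mul_of_nonneg_left (hδ i) (abs_nonneg _)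
      _ = ε * ∑ i, |gradient f x i| := by rw [← Finset.sum_mul]; ring
  have hmem0 : (0:ℝ) ∈ S := ⟨0, fun i => by simpa using hε, by simp⟩
  have hub : ∀ y ∈ S, y ≤ ε * (∑ i, |gradient f x i|) + L / 2 * n * ε ^ 2 := by
    rintro y ⟨δ, hδ, rfl⟩
    have h1 := taylor_aux hf hL x δ
    have h2 := hinner δ hδ
    have h3 := hnorm δ hδ
    have h4 : |f (x + δ) - f x| ≤ |⟪gradient f x, δ⟫|
        + |f (x + δ) - f x - ⟪gradient f x, δ⟫| := by
      calc |f (x + δ) - f x|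
          = |⟪gradient f x, δ⟫ + (f (x + δ) - f x - ⟪gradient f x, δ⟫)| := by
            congr 1; ring
        _ ≤ _ := abs_add_le _ _
    linarith
  have hbdd : BddAbove S := ⟨_, hub⟩
  constructor
  · -- lower bound
    have hsign : ∀ a : ℝ, |Real.sign a| ≤ 1 := by
      intro a
      rcases lt_trichotomy a 0 with h | h | h
      · rw [Real.sign_of_neg h]; norm_num
      · rw [h, Real.sign_zero]; norm_num
      · rw [Real.sign_of_pos h]; norm_num
    have hmulsign : ∀ a : ℝ, a * Real.sign a = |a| := by
      intro a
      rcases lt_trichotomy a 0 with h | h | h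
      · rw [Real.sign_of_neg h, abs_of_neg h]; ring
      · simp [h]
      · rw [Real.sign_of_pos h, abs_of_pos h]; ring
    set δ : EuclideanSpace ℝ (Fin n) := WithLp.toLp 2 (fun i => ε * Real.sign (gradient f x i)) with hδdef
    have hδ : ∀ i, |δ i| ≤ ε := by
      intro i
      rw [hδdef]
      calc |ε * Real.sign (gradient f x i)| = ε * |Real.sign (gradient f x i)| := by
            rw [abs_mul, abs_of_nonneg hε]
        _ ≤ ε * 1 := mul_le_mul_of_nonneg_left (hsign _) hε
        _ = ε := mul_one ε
    have hinneq : ⟪gradient f x, δ⟫ = ε * ∑ i, |gradient f x i| := by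
      rw [PiLp.inner_apply]
      simp only [RCLike.inner_apply, starRingEnd_apply, star_trivial]
      rw [show (∑ i, δ i * gradient f x i) = ∑ i, gradient f x i * δ i from
        Finset.sum_congr rfl fun i _ => mul_comm _ _]
      rw [Finset.mul_sum]
      apply Finset.sum_congr rfl
      intro i _
      rw [hδdef]
      calc gradient f x i * (ε * Real.sign (gradient f x i))
          = ε * (gradient f x i * Real.sign (gradient f x i)) := by ring
        _ = ε * |gradient f x i| := by rw [hmulsign]
    have h1 := taylor_aux hf hL x δ
    have h3 := hnorm δ hδ
    have hy : |f (x + δ) - f x| ∈ S := ⟨δ, hδ, rfl⟩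
    have h5 : ε * (∑ i, |gradient f x i|) - L / 2 * n * ε ^ 2 ≤ |f (x + δ) - f x| := by
      have h6 := (abs_le.1 h1).1
      have h7 := le_abs_self (f (x + δ) - f x)
      linarith [hinneq ▸ h6]
    exact h5.trans (le_csSup hbdd hy)
  · exact csSup_le ⟨0, hmem0⟩ hub
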